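/- The function J_R is differentiable on (0,∞) and J_R′(y) = −X_R(y) for every y > 0; equivalently, (2/(θ²(n₁−n₂)))[n₂ y^{n₂−1}∫₀^y η^{−n₂−1}ũ(η)dη + n₁ y^{n₁−1}∫_y^∞ η^{−n₁−1}ũ(η)dη] = −(2/(θ²(n₁−n₂)))[y^{n₂−1}∫₀^y η^{−n₂}I(η)dη + y^{n₁−1}∫_y^∞ η^{−n₁}I(η)dη]. -/

import Mathlib

open MeasureTheory Set


section Aux
variable {u u' I utld : ℝ → ℝ}

/-- tangent line inequality for a concave function -/
lemma aux_tangent (hu_conc : StrictConcaveOn ℝ (Set.Ici 0) u)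
    (hu_deriv : ∀ c : ℝ, 0 < c → HasDerivAt u (u' c) c)
    {a c : ℝ} (ha : 0 < a) (hc : 0 ≤ c) : u c ≤ u a + u' a * (c - a) := by
  have hconv : ConvexOn ℝ (Set.Ici 0) (fun x => -u x) := hu_conc.concaveOn.neg
  have hd : HasDerivAt (fun x => -u x) (-(u' a)) a := (hu_deriv a ha).neg
  rcases lt_trichotomy c a with h | h | h
  · have := hconv.slope_le_of_hasDerivAt (Set.mem_Ici.2 hc) (Set.mem_Ici.2 ha.le) h hd
    rw [slope_def_field] at this
    have hca : 0 < a - c := by linarith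
    rw [div_le_iff₀ hca] at this
    nlinarith
  · subst h; simp
  · have := hconv.le_slope_of_hasDerivAt (Set.mem_Ici.2 ha.le) (Set.mem_Ici.2 hc) h hd
    rw [slope_def_field] at this
    have hca : 0 < c - a := by linarith
    rw [le_div_iff₀ hca] at this
    nlinarith

/-- utld is the Legendre sup -/
lemma aux_max (hu_conc : StrictConcaveOn ℝ (Set.Ici 0) u)
    (hu_deriv : ∀ c : ℝ, 0 < c → HasDerivAt u (u' c) c)
    (hI_pos : ∀ y : ℝ, 0 < y → 0 < I y)
    (hI_left : ∀ y : ℝ, 0 < y → u' (I y) = y)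
    (hutld : ∀ y : ℝ, 0 < y → utld y = u (I y) - y * I y)
    {y c : ℝ} (hy : 0 < y) (hc : 0 ≤ c) : u c - y * c ≤ utld y := by
  have h := aux_tangent hu_conc hu_deriv (hI_pos y hy) hc
  rw [hI_left y hy] at h
  rw [hutld y hy]; linarith

lemma aux_key (hu_conc : StrictConcaveOn ℝ (Set.Ici 0) u)
    (hu_deriv : ∀ c : ℝ, 0 < c → HasDerivAt u (u' c) c)
    (hI_pos : ∀ y : ℝ, 0 < y → 0 < I y)
    (hI_left : ∀ y : ℝ, 0 < y → u' (I y) = y)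
    (hutld : ∀ y : ℝ, 0 < y → utld y = u (I y) - y * I y)
    {y z : ℝ} (hy : 0 < y) (hz : 0 < z) :
    utld y + (y - z) * I y ≤ utld z := by
  have h := aux_max hu_conc hu_deriv hI_pos hI_left hutld hz (hI_pos y hy).le
  rw [hutld y hy] at *
  linarith

/-- derivative of utld -/
lemma aux_utld_deriv (hu_conc : StrictConcaveOn ℝ (Set.Ici 0) u)
    (hu_deriv : ∀ c : ℝ, 0 < c → HasDerivAt u (u' c) c)
    (hI_pos : ∀ y : ℝ, 0 < y → 0 < I y)
    (hI_left : ∀ y : ℝ, 0 < y → u' (I y) = y)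
    (hI_cont : ContinuousOn I (Set.Ioi 0))
    (hutld : ∀ y : ℝ, 0 < y → utld y = u (I y) - y * I y)
    {y : ℝ} (hy : 0 < y) : HasDerivAt utld (-(I y)) y := by
  rw [hasDerivAt_iff_tendsto_slope]
  have hIy : ContinuousAt I y := hI_cont.continuousAt (Ioi_mem_nhds hy)
  have hIt : Filter.Tendsto (fun z => |I z - I y|) (nhdsWithin y {y}ᶜ) (nhds 0) := by
    have : Filter.Tendsto (fun z => I z - I y) (nhdsWithin y {y}ᶜ) (nhds (I y - I y)) :=
      ((hIy.tendsto.mono_left nhdsWithin_le_nhds).sub tendsto_const_nhds)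
    simpa using this.abs
  have hev : ∀ᶠ z in nhdsWithin y {y}ᶜ, ‖slope utld y z - (-(I y))‖ ≤ |I z - I y| := by
    have hmem : Set.Ioi (0:ℝ) ∈ nhdsWithin y {y}ᶜ :=
      nhdsWithin_le_nhds (Ioi_mem_nhds hy)
    have hne : {y}ᶜ ∈ nhdsWithin y {y}ᶜ := self_mem_nhdsWithin
    filter_upwards [hmem, hne] with z hz hzne
    have hz : (0:ℝ) < z := hz
    have hzy : z ≠ y := by simpa using hzne
    have h1 := aux_key hu_conc hu_deriv hI_pos hI_left hutld hy hz
    have h2 := aux_key hu_conc hu_deriv hI_pos hI_left hutld hz hy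
    rw [slope_def_field]
    rcases lt_or_gt_of_ne hzy with h | h
    · -- z < y
      have hd : z - y < 0 := by linarith
      rw [Real.norm_eq_abs, abs_le]
      constructor
      · rw [le_sub_iff_add_le, le_div_iff_of_neg hd]
        nlinarith [le_abs_self (I z - I y), neg_abs_le (I z - I y)]
      · rw [sub_le_iff_le_add, div_le_iff_of_neg hd]
        nlinarith [le_abs_self (I z - I y), neg_abs_le (I z - I y)]
    · have hd : 0 < z - y := by linarith
      rw [Real.norm_eq_abs, abs_le]
      constructor
      · rw [le_sub_iff_add_le, le_div_iff₀ hd]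
        nlinarith [le_abs_self (I z - I y), neg_abs_le (I z - I y)]
      · rw [sub_le_iff_le_add, div_le_iff₀ hd]
        nlinarith [le_abs_self (I z - I y), neg_abs_le (I z - I y)]
  have := squeeze_zero_norm' (f := fun z => slope utld y z - (-(I y))) hev hIt
  have h2 : Filter.Tendsto (fun z => (slope utld y z - (-(I y))) + (-(I y)))
      (nhdsWithin y {y}ᶜ) (nhds (0 + (-(I y)))) := this.add tendsto_const_nhds
  simpa using h2

end Aux


section Aux2
variable {u I utld : ℝ → ℝ}

-- packaged hypotheses that later lemmas use
variable (hderiv : ∀ y : ℝ, 0 < y → HasDerivAt utld (-(I y)) y)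
  (hI_pos : ∀ y : ℝ, 0 < y → 0 < I y)
  (hI_cont : ContinuousOn I (Set.Ioi 0))

/-- FTC for utld -/
lemma aux_ftc (hderiv : ∀ y : ℝ, 0 < y → HasDerivAt utld (-(I y)) y)
    (hI_cont : ContinuousOn I (Set.Ioi 0))
    {a b : ℝ} (ha : 0 < a) (hab : a ≤ b) :
    utld a - utld b = ∫ s in a..b, I s := by
  have hb : 0 < b := lt_of_lt_of_le ha hab
  have hIint : IntervalIntegrable I volume a b := by
    apply ContinuousOn.intervalIntegrable
    apply hI_cont.mono
    rw [Set.uIcc_of_le hab]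
    intro x hx; exact lt_of_lt_of_le ha hx.1
  have h := intervalIntegral.integral_eq_sub_of_hasDerivAt (f := utld) (f' := fun s => -(I s))
    (fun x hx => by
      rw [Set.uIcc_of_le hab] at hx
      exact hderiv x (lt_of_lt_of_le ha hx.1)) hIint.neg
  rw [intervalIntegral.integral_neg] at h
  linarith

/-- utld tends to u 0 at infinity -/
lemma aux_utld_top
    (hu_cont : ContinuousOn u (Set.Ici 0))
    (hI_pos : ∀ y : ℝ, 0 < y → 0 < I y)
    (hI_top : Filter.Tendsto I Filter.atTop (nhds 0))
    (hutld : ∀ y : ℝ, 0 < y → utld y = u (I y) - y * I y)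
    (hlow : ∀ y : ℝ, 0 < y → u 0 ≤ utld y) :
    Filter.Tendsto utld Filter.atTop (nhds (u 0)) := by
  have huI : Filter.Tendsto (fun y => u (I y)) Filter.atTop (nhds (u 0)) := by
    have hc : ContinuousWithinAt u (Set.Ici 0) 0 := hu_cont 0 (by simp)
    apply hc.tendsto.comp
    rw [tendsto_nhdsWithin_iff]
    exact ⟨hI_top, by filter_upwards [Filter.eventually_gt_atTop 0] with y hy
                      exact (hI_pos y hy).le⟩
  have hyI : Filter.Tendsto (fun y => y * I y) Filter.atTop (nhds 0) := by
    apply squeeze_zero_norm' (a := fun y => u (I y) - u 0)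
    · filter_upwards [Filter.eventually_gt_atTop 0] with y hy
      have h1 := hlow y hy
      rw [hutld y hy] at h1
      have h2 : 0 ≤ y * I y := mul_nonneg hy.le (hI_pos y hy).le
      rw [Real.norm_eq_abs, abs_of_nonneg h2]; linarith
    · simpa using huI.sub (tendsto_const_nhds (x := u 0))
  have := huI.sub hyI
  rw [sub_zero] at this
  apply this.congr'
  filter_upwards [Filter.eventually_gt_atTop 0] with y hy
  exact (hutld y hy).symm

/-- I is integrable on Ioi y with value utld y - u 0 -/
lemma aux_I_int_Ioi
    (hderiv : ∀ y : ℝ, 0 < y → HasDerivAt utld (-(I y)) y)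
    (hI_pos : ∀ y : ℝ, 0 < y → 0 < I y)
    (htop : Filter.Tendsto utld Filter.atTop (nhds (u 0)))
    {y : ℝ} (hy : 0 < y) :
    IntegrableOn I (Set.Ioi y) volume ∧ ∫ s in Set.Ioi y, I s = utld y - u 0 := by
  have hcont : ContinuousWithinAt (fun s => -(utld s)) (Set.Ici y) y :=
    (((hderiv y hy).continuousAt).neg).continuousWithinAt
  have hd : ∀ x ∈ Set.Ioi y, HasDerivAt (fun s => -(utld s)) (I x) x := fun x hx => by
    have := (hderiv x (lt_trans hy hx)).neg; rw [neg_neg] at this; exact this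
  have hpos : ∀ x ∈ Set.Ioi y, 0 ≤ I x := fun x hx => (hI_pos x (lt_trans hy hx)).le
  have htop' : Filter.Tendsto (fun s => -(utld s)) Filter.atTop (nhds (-(u 0))) := htop.neg
  exact ⟨integrableOn_Ioi_deriv_of_nonneg hcont hd hpos htop',
    by rw [integral_Ioi_of_hasDerivAt_of_nonneg hcont hd hpos htop']; ring⟩

end Aux2


section Aux3
variable {u I utld : ℝ → ℝ}

lemma aux_right {n₁ : ℝ}
    (hderiv : ∀ y : ℝ, 0 < y → HasDerivAt utld (-(I y)) y)
    (hI_pos : ∀ y : ℝ, 0 < y → 0 < I y)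
    (hI_cont : ContinuousOn I (Set.Ioi 0))
    (hlow : ∀ y : ℝ, 0 < y → u 0 ≤ utld y)
    (htop : Filter.Tendsto utld Filter.atTop (nhds (u 0)))
    (hn₁ : 1 < n₁) {Y : ℝ} (hY : 0 < Y) :
    IntegrableOn (fun η => η ^ (-n₁) * I η) (Set.Ioi Y) volume ∧
    IntegrableOn (fun η => η ^ (-n₁ - 1) * utld η) (Set.Ioi Y) volume ∧
    n₁ * ∫ η in Set.Ioi Y, η ^ (-n₁ - 1) * utld η
      = Y ^ (-n₁) * utld Y - ∫ η in Set.Ioi Y, η ^ (-n₁) * I η := by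
  have hn₁0 : (0:ℝ) < n₁ := by linarith
  set G : ℝ → ℝ := fun η => η ^ (-n₁ - 1) * (utld η - u 0) + (1/n₁) * (η ^ (-n₁) * I η) with hG
  set Φ : ℝ → ℝ := fun η => (-(1/n₁)) * (η ^ (-n₁) * (utld η - u 0)) with hΦ
  -- derivative of Φ
  have hΦd : ∀ x : ℝ, 0 < x → HasDerivAt Φ (G x) x := by
    intro x hx
    have h1 : HasDerivAt (fun η : ℝ => η ^ (-n₁)) (-n₁ * x ^ (-n₁ - 1)) x :=
      Real.hasDerivAt_rpow_const (Or.inl hx.ne')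
    have h2 : HasDerivAt (fun η => utld η - u 0) (-(I x)) x := (hderiv x hx).sub_const _
    have h3 := (h1.mul h2).const_mul (-(1/n₁))
    refine h3.congr_deriv ?_
    rw [hG]
    field_simp
    ring
  have hΦcont : ContinuousWithinAt Φ (Set.Ici Y) Y := ((hΦd Y hY).continuousAt).continuousWithinAt
  have hΦd' : ∀ x ∈ Set.Ioi Y, HasDerivAt Φ (G x) x := fun x hx => hΦd x (lt_trans hY hx)
  have hGpos : ∀ x ∈ Set.Ioi Y, 0 ≤ G x := by
    intro x hx
    have hx0 : 0 < x := lt_trans hY hx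
    have := hlow x hx0
    have h1 : 0 ≤ x ^ (-n₁ - 1) := (Real.rpow_pos_of_pos hx0 _).le
    have h2 : 0 ≤ x ^ (-n₁) := (Real.rpow_pos_of_pos hx0 _).le
    have h3 := (hI_pos x hx0).le
    have h4 : 0 ≤ 1/n₁ := by positivity
    apply add_nonneg (mul_nonneg h1 (by linarith)) (mul_nonneg h4 (mul_nonneg h2 h3))
  have hΦtop : Filter.Tendsto Φ Filter.atTop (nhds 0) := by
    have h1 : Filter.Tendsto (fun η : ℝ => η ^ (-n₁)) Filter.atTop (nhds 0) :=
      tendsto_rpow_neg_atTop hn₁0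
    have h2 : Filter.Tendsto (fun η => utld η - u 0) Filter.atTop (nhds 0) := by
      simpa using htop.sub (tendsto_const_nhds (x := u 0))
    have h3 := (h1.mul h2).const_mul (-(1/n₁))
    have h0 : (-(1/n₁) * ((0:ℝ) * 0)) = 0 := by ring
    rw [h0] at h3; exact h3
  have hGint : IntegrableOn G (Set.Ioi Y) volume :=
    integrableOn_Ioi_deriv_of_nonneg hΦcont hΦd' hGpos hΦtop
  have hGval : ∫ x in Set.Ioi Y, G x = (1/n₁) * (Y ^ (-n₁) * (utld Y - u 0)) := by
    rw [integral_Ioi_of_hasDerivAt_of_nonneg hΦcont hΦd' hGpos hΦtop]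
    rw [hΦ]; ring
  -- continuity facts
  have hutld_cont : ContinuousOn utld (Set.Ioi 0) := fun x hx =>
    ((hderiv x hx).continuousAt).continuousWithinAt
  have hrp : ∀ p : ℝ, ContinuousOn (fun η : ℝ => η ^ p) (Set.Ioi 0) := fun p x hx =>
    (Real.continuousAt_rpow_const x p (Or.inl (ne_of_gt hx))).continuousWithinAt
  have hIoiY : Set.Ioi Y ⊆ Set.Ioi (0:ℝ) := fun x hx => lt_trans hY hx
  have hk_cont : ContinuousOn (fun η : ℝ => (1/n₁) * (η ^ (-n₁) * I η)) (Set.Ioi Y) :=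
    (((hrp (-n₁)).mul hI_cont).const_smul (1/n₁)).mono hIoiY
  have hkmeas : AEStronglyMeasurable (fun η : ℝ => (1/n₁) * (η ^ (-n₁) * I η))
      (volume.restrict (Set.Ioi Y)) :=
    hk_cont.aestronglyMeasurable measurableSet_Ioi
  -- k integrable
  have hkint : IntegrableOn (fun η : ℝ => (1/n₁) * (η ^ (-n₁) * I η)) (Set.Ioi Y) volume := by
    apply Integrable.mono hGint hkmeas
    rw [ae_restrict_iff' measurableSet_Ioi]
    apply ae_of_all
    intro x hx
    have hx0 : 0 < x := lt_trans hY hx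
    have h1 : 0 ≤ x ^ (-n₁ - 1) * (utld x - u 0) :=
      mul_nonneg (Real.rpow_pos_of_pos hx0 _).le (by linarith [hlow x hx0])
    have h2 : 0 ≤ (1/n₁) * (x ^ (-n₁) * I x) := by
      have := (hI_pos x hx0).le
      have h2' : 0 ≤ x ^ (-n₁) := (Real.rpow_pos_of_pos hx0 _).le
      positivity
    rw [Real.norm_eq_abs, Real.norm_eq_abs, abs_of_nonneg h2, abs_of_nonneg (hGpos x hx)]
    rw [hG]; simp only []; linarith
  -- the pure I-integrand
  have hQint : IntegrableOn (fun η : ℝ => η ^ (-n₁) * I η) (Set.Ioi Y) volume := by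
    have h := (hkint.const_mul n₁ : IntegrableOn (fun x => n₁ * ((1/n₁) * (x ^ (-n₁) * I x))) _ _)
    apply MeasureTheory.IntegrableOn.congr_fun h ?_ measurableSet_Ioi
    intro x _
    field_simp
  have hQrel : ∫ η in Set.Ioi Y, η ^ (-n₁) * I η
      = n₁ * ∫ η in Set.Ioi Y, (1/n₁) * (η ^ (-n₁) * I η) := by
    rw [MeasureTheory.integral_const_mul]
    field_simp
  -- g1
  have hg1int : IntegrableOn (fun η : ℝ => η ^ (-n₁ - 1) * (utld η - u 0)) (Set.Ioi Y) volume := by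
    have h := (hGint.sub hkint : IntegrableOn (fun x => G x - (1/n₁) * (x ^ (-n₁) * I x)) _ _)
    apply MeasureTheory.IntegrableOn.congr_fun h ?_ measurableSet_Ioi
    intro x _; simp only [Pi.sub_apply, hG]; ring
  have hg1val : ∫ η in Set.Ioi Y, η ^ (-n₁ - 1) * (utld η - u 0)
      = (1/n₁) * (Y ^ (-n₁) * (utld Y - u 0)) - ∫ η in Set.Ioi Y, (1/n₁) * (η ^ (-n₁) * I η) := by
    rw [← hGval, ← integral_sub hGint hkint]
    apply setIntegral_congr_fun measurableSet_Ioi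
    intro x _; rw [hG]; ring
  -- g2
  have hg2int : IntegrableOn (fun η : ℝ => η ^ (-n₁ - 1) * u 0) (Set.Ioi Y) volume :=
    (integrableOn_Ioi_rpow_of_lt (by linarith) hY).mul_const (u 0)
  have hg2val : ∫ η in Set.Ioi Y, η ^ (-n₁ - 1) * u 0 = (Y ^ (-n₁) / n₁) * u 0 := by
    have h := MeasureTheory.integral_mul_const (μ := volume.restrict (Set.Ioi Y)) (u 0) (fun η : ℝ => η ^ (-n₁ - 1))
    rw [h, integral_Ioi_rpow_of_lt (by linarith) hY]
    have : (-n₁ - 1 + 1 : ℝ) = -n₁ := by ring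
    rw [this]
    field_simp
  -- combine
  have hsplit : ∀ x ∈ Set.Ioi Y, x ^ (-n₁ - 1) * utld x
      = x ^ (-n₁ - 1) * (utld x - u 0) + x ^ (-n₁ - 1) * u 0 := by
    intro x _; ring
  have hBint : IntegrableOn (fun η : ℝ => η ^ (-n₁ - 1) * utld η) (Set.Ioi Y) volume := by
    have h := (hg1int.add hg2int : IntegrableOn (fun x => x ^ (-n₁ - 1) * (utld x - u 0) + x ^ (-n₁ - 1) * u 0) _ _)
    apply MeasureTheory.IntegrableOn.congr_fun h ?_ measurableSet_Ioi
    intro x hx; simp only [Pi.add_apply]; exact (hsplit x hx).symm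
  refine ⟨hQint, hBint, ?_⟩
  have : ∫ η in Set.Ioi Y, η ^ (-n₁ - 1) * utld η
      = (∫ η in Set.Ioi Y, η ^ (-n₁ - 1) * (utld η - u 0)) + ∫ η in Set.Ioi Y, η ^ (-n₁ - 1) * u 0 := by
    rw [← integral_add hg1int hg2int]
    exact setIntegral_congr_fun measurableSet_Ioi hsplit
  rw [this, hg1val, hg2val, hQrel]
  field_simp
  ring
end Aux3


section Aux4

/-- vanishing tail of an integrable nonneg function at 0 -/
lemma aux_AT {f : ℝ → ℝ} {Y : ℝ} (hY : 0 < Y)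
    (hint : IntegrableOn f (Set.Ioo 0 Y) volume)
    (hpos : ∀ x ∈ Set.Ioo (0:ℝ) Y, 0 ≤ f x) :
    Filter.Tendsto (fun δ => ∫ η in Set.Ioo 0 δ, f η) (nhdsWithin 0 (Set.Ioi 0)) (nhds 0) := by
  have hposae : ∀ {c : ℝ}, c ≤ Y → (fun _ : ℝ => (0:ℝ)) ≤ᵐ[volume.restrict (Set.Ioo 0 c)] f := by
    intro c hc
    have := (ae_restrict_iff' (μ := volume) (p := fun x => (0:ℝ) ≤ f x) measurableSet_Ioo).2
      (ae_of_all _ fun x (hx : x ∈ Set.Ioo (0:ℝ) c) => hpos x ⟨hx.1, lt_of_lt_of_le hx.2 hc⟩)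
    exact this
  have hYn : ∀ n : ℕ, Y/(n+1) ≤ Y := fun n =>
    div_le_self hY.le (by have : (0:ℝ) ≤ n := Nat.cast_nonneg n; linarith)
  have hseq : Filter.Tendsto (fun n : ℕ => ∫ η in Set.Ioo 0 (Y/(n+1)), f η)
      Filter.atTop (nhds 0) := by
    have h_anti : Antitone (fun n : ℕ => Set.Ioo (0:ℝ) (Y/(n+1))) := by
      intro m n hmn
      apply Set.Ioo_subset_Ioo_right
      apply div_le_div_of_nonneg_left hY.le (by positivity)
      have : (m:ℝ) ≤ n := Nat.cast_le.2 hmn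
      linarith
    have hsm : ∀ n : ℕ, MeasurableSet (Set.Ioo (0:ℝ) (Y/(n+1))) := fun n => measurableSet_Ioo
    have hfi : ∃ n : ℕ, IntegrableOn f (Set.Ioo (0:ℝ) (Y/(n+1))) volume :=
      ⟨0, hint.mono_set (Set.Ioo_subset_Ioo_right (hYn 0))⟩
    have h := tendsto_setIntegral_of_antitone hsm h_anti hfi
    have hempty : (⋂ n : ℕ, Set.Ioo (0:ℝ) (Y/(n+1))) = ∅ := by
      ext x
      simp only [Set.mem_iInter, Set.mem_Ioo, Set.mem_empty_iff_false, iff_false, not_forall]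
      by_cases hx0 : 0 < x
      · obtain ⟨n, hn⟩ := exists_nat_gt (Y / x)
        refine ⟨n, fun hmem => ?_⟩
        have h2 := hmem.2
        rw [lt_div_iff₀ (by positivity : (0:ℝ) < (n:ℝ)+1)] at h2
        rw [div_lt_iff₀ hx0] at hn
        nlinarith
      · exact ⟨0, fun hmem => hx0 hmem.1⟩
    rw [hempty] at h
    simpa using h
  rw [tendsto_order]
  constructor
  · intro b hb
    have hmem : Set.Ioo (0:ℝ) Y ∈ nhdsWithin (0:ℝ) (Set.Ioi 0) :=
      Ioo_mem_nhdsGT_of_mem ⟨le_refl 0, hY⟩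
    filter_upwards [hmem] with δ hδ
    have h0 : 0 ≤ ∫ η in Set.Ioo 0 δ, f η := by
      apply setIntegral_nonneg measurableSet_Ioo
      intro x hx
      exact hpos x ⟨hx.1, hx.2.trans hδ.2⟩
    linarith
  · intro b hb
    obtain ⟨n, hn⟩ := (hseq.eventually (gt_mem_nhds hb)).exists
    have hmem : Set.Ioo (0:ℝ) (Y/(n+1)) ∈ nhdsWithin (0:ℝ) (Set.Ioi 0) :=
      Ioo_mem_nhdsGT_of_mem ⟨le_refl 0, by positivity⟩
    filter_upwards [hmem] with δ hδ
    have hintn : IntegrableOn f (Set.Ioo (0:ℝ) (Y/(n+1))) volume :=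
      hint.mono_set (Set.Ioo_subset_Ioo_right (hYn n))
    calc ∫ η in Set.Ioo 0 δ, f η ≤ ∫ η in Set.Ioo 0 (Y/(n+1)), f η := by
          apply setIntegral_mono_set hintn (hposae (hYn n))
          exact Filter.Eventually.of_forall (Set.Ioo_subset_Ioo_right hδ.2.le)
      _ < b := hn



lemma aux_B0 {I : ℝ → ℝ} {n₂ Y : ℝ} (hn₂ : n₂ < 0) (hY : 0 < Y)
    (hI_pos : ∀ y : ℝ, 0 < y → 0 < I y) (hI_cont : ContinuousOn I (Set.Ioi 0))
    (hint : IntegrableOn (fun η => η ^ (-n₂) * I η) (Set.Ioo 0 Y) volume) :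
    Filter.Tendsto (fun ε => ε ^ (-n₂) * ∫ s in ε..Y, I s)
      (nhdsWithin 0 (Set.Ioi 0)) (nhds 0) := by
  have hII : ∀ {a b : ℝ}, 0 < a → a ≤ b → IntervalIntegrable I volume a b := by
    intro a b ha hab
    apply ContinuousOn.intervalIntegrable
    apply hI_cont.mono
    rw [Set.uIcc_of_le hab]
    exact fun x hx => lt_of_lt_of_le ha hx.1
  have hkpos : ∀ x ∈ Set.Ioo (0:ℝ) Y, 0 ≤ x ^ (-n₂) * I x := fun x hx =>
    mul_nonneg (Real.rpow_nonneg hx.1.le _) (hI_pos x hx.1).le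
  rw [tendsto_order]
  constructor
  · intro b hb
    filter_upwards [Ioo_mem_nhdsGT_of_mem (Set.left_mem_Ico.2 hY)] with ε hε
    have h1 : (0:ℝ) < ε ^ (-n₂) := Real.rpow_pos_of_pos hε.1 _
    have h2 : 0 ≤ ∫ s in ε..Y, I s :=
      intervalIntegral.integral_nonneg hε.2.le (fun x hx => (hI_pos x (lt_of_lt_of_le hε.1 hx.1)).le)
    nlinarith
  · intro b hb
    have hT := aux_AT hY hint hkpos
    have hhalf : (0:ℝ) < b/2 := by linarith
    obtain ⟨δ, hδb, hδ⟩ := ((hT.eventually (gt_mem_nhds hhalf)).and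
      (Ioo_mem_nhdsGT_of_mem (Set.left_mem_Ico.2 hY))).exists
    set Cδ := ∫ s in δ..Y, I s with hCδdef
    have hCδ : 0 ≤ Cδ :=
      intervalIntegral.integral_nonneg hδ.2.le (fun x hx => (hI_pos x (lt_of_lt_of_le hδ.1 hx.1)).le)
    have hrt : Filter.Tendsto (fun ε : ℝ => ε ^ (-n₂)) (nhdsWithin 0 (Set.Ioi 0)) (nhds 0) := by
      have hc : ContinuousAt (fun x : ℝ => x ^ (-n₂)) 0 :=
        Real.continuousAt_rpow_const 0 (-n₂) (Or.inr (by linarith))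
      have h := hc.tendsto.mono_left (nhdsWithin_le_nhds (s := Set.Ioi (0:ℝ)))
      rwa [Real.zero_rpow (by linarith : -n₂ ≠ 0)] at h
    have heps := hrt.eventually (gt_mem_nhds (by positivity : (0:ℝ) < (b/2)/(Cδ+1)))
    filter_upwards [heps, Ioo_mem_nhdsGT_of_mem (Set.left_mem_Ico.2 hδ.1)] with ε hεs hε
    have hε0 : 0 < ε := hε.1
    have hεδ : ε < δ := hε.2
    have hεY : ε < Y := hεδ.trans hδ.2
    have hsplit : ∫ s in ε..Y, I s = (∫ s in ε..δ, I s) + Cδ :=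
      (intervalIntegral.integral_add_adjacent_intervals (hII hε0 hεδ.le) (hII hδ.1 hδ.2.le)).symm
    have hterm1 : ε ^ (-n₂) * ∫ s in ε..δ, I s ≤ ∫ η in Set.Ioo 0 δ, η ^ (-n₂) * I η := by
      rw [← intervalIntegral.integral_const_mul]
      have hmon : ∫ s in ε..δ, ε ^ (-n₂) * I s ≤ ∫ s in ε..δ, s ^ (-n₂) * I s := by
        apply intervalIntegral.integral_mono_on hεδ.le ((hII hε0 hεδ.le).const_mul _)
        · apply ContinuousOn.intervalIntegrable
          apply ContinuousOn.mul ?_ (hI_cont.mono ?_)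
          · intro x hx
            rw [Set.uIcc_of_le hεδ.le] at hx
            exact (Real.continuousAt_rpow_const x (-n₂) (Or.inl (ne_of_gt (lt_of_lt_of_le hε0 hx.1)))).continuousWithinAt
          · rw [Set.uIcc_of_le hεδ.le]
            exact fun x hx => lt_of_lt_of_le hε0 hx.1
        · intro x hx
          apply mul_le_mul_of_nonneg_right
          · exact Real.rpow_le_rpow hε0.le hx.1 (by linarith)
          · exact (hI_pos x (lt_of_lt_of_le hε0 hx.1)).le
      refine hmon.trans ?_
      rw [intervalIntegral.integral_of_le hεδ.le]
      have hioc : IntegrableOn (fun η : ℝ => η ^ (-n₂) * I η) (Set.Ioc 0 δ) volume := by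
        apply hint.mono_set
        intro x hx
        exact ⟨hx.1, lt_of_le_of_lt hx.2 hδ.2⟩
      calc ∫ s in Set.Ioc ε δ, s ^ (-n₂) * I s ≤ ∫ s in Set.Ioc 0 δ, s ^ (-n₂) * I s := by
            apply setIntegral_mono_set hioc
            · exact (ae_restrict_iff' (μ := volume)
                (p := fun x => (0:ℝ) ≤ x ^ (-n₂) * I x) measurableSet_Ioc).2
                (ae_of_all _ fun x (hx : x ∈ Set.Ioc (0:ℝ) δ) =>
                  hkpos x ⟨hx.1, lt_of_le_of_lt hx.2 hδ.2⟩)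
            · exact Filter.Eventually.of_forall (Set.Ioc_subset_Ioc_left hε0.le)
        _ = ∫ s in Set.Ioo 0 δ, s ^ (-n₂) * I s := integral_Ioc_eq_integral_Ioo
    have hterm2 : ε ^ (-n₂) * Cδ ≤ b/2 := by
      have h1 : ε ^ (-n₂) ≤ (b/2)/(Cδ+1) := le_of_lt hεs
      have h2 : (0:ℝ) ≤ ε ^ (-n₂) := Real.rpow_nonneg hε0.le _
      have : ε ^ (-n₂) * Cδ ≤ (b/2)/(Cδ+1) * Cδ := mul_le_mul_of_nonneg_right h1 hCδ
      have h3 : (b/2)/(Cδ+1) * Cδ ≤ b/2 := by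
        rw [div_mul_eq_mul_div, div_le_iff₀ (by linarith)]
        nlinarith
      linarith
    rw [hsplit, mul_add]
    linarith

end Aux4



lemma aux_left {u I utld : ℝ → ℝ} {n₂ Y : ℝ}
    (hderiv : ∀ y : ℝ, 0 < y → HasDerivAt utld (-(I y)) y)
    (hI_pos : ∀ y : ℝ, 0 < y → 0 < I y)
    (hI_cont : ContinuousOn I (Set.Ioi 0))
    (hftc : ∀ {a b : ℝ}, 0 < a → a ≤ b → utld a - utld b = ∫ s in a..b, I s)
    (hB0 : Filter.Tendsto (fun ε => ε ^ (-n₂) * ∫ s in ε..Y, I s)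
      (nhdsWithin 0 (Set.Ioi 0)) (nhds 0))
    (hn₂ : n₂ < 0) (hY : 0 < Y)
    (hint : IntegrableOn (fun η => η ^ (-n₂) * I η) (Set.Ioo 0 Y) volume) :
    IntegrableOn (fun η => η ^ (-n₂ - 1) * utld η) (Set.Ioo 0 Y) volume ∧
    n₂ * ∫ η in Set.Ioo 0 Y, η ^ (-n₂ - 1) * utld η
      = -(Y ^ (-n₂) * utld Y + ∫ η in Set.Ioo 0 Y, η ^ (-n₂) * I η) := by
  have hn₂0 : (0:ℝ) < -n₂ := by linarith
  have hanti : ∀ {a b : ℝ}, 0 < a → a ≤ b → utld b ≤ utld a := by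
    intro a b ha hab
    have h := hftc ha hab
    have : 0 ≤ ∫ s in a..b, I s :=
      intervalIntegral.integral_nonneg hab (fun x hx => (hI_pos x (lt_of_lt_of_le ha hx.1)).le)
    linarith
  set g₁ : ℝ → ℝ := fun η => η ^ (-n₂ - 1) * (utld η - utld Y) with hg₁def
  set kp : ℝ → ℝ := fun η => η ^ (-n₂) * I η with hkpdef
  set G : ℝ → ℝ := fun η => g₁ η + (1/n₂) * kp η with hGdef
  set H : ℝ → ℝ := fun η => (-(1/n₂)) * (η ^ (-n₂) * (utld η - utld Y)) with hHdef
  have hutld_cont : ContinuousOn utld (Set.Ioi 0) := fun x hx =>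
    ((hderiv x hx).continuousAt).continuousWithinAt
  have hrp : ∀ p : ℝ, ContinuousOn (fun η : ℝ => η ^ p) (Set.Ioi 0) := fun p x hx =>
    (Real.continuousAt_rpow_const x p (Or.inl (ne_of_gt hx))).continuousWithinAt
  have hg₁cont : ContinuousOn g₁ (Set.Ioi 0) :=
    (hrp _).mul (hutld_cont.sub continuousOn_const)
  have hkpcont : ContinuousOn kp (Set.Ioi 0) := (hrp _).mul hI_cont
  have hGcont : ContinuousOn G (Set.Ioi 0) := hg₁cont.add (continuousOn_const.mul hkpcont)
  have hIIof : ∀ {f : ℝ → ℝ}, ContinuousOn f (Set.Ioi 0) → ∀ {a b : ℝ}, 0 < a → a ≤ b →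
      IntervalIntegrable f volume a b := by
    intro f hf a b ha hab
    apply ContinuousOn.intervalIntegrable
    apply hf.mono
    rw [Set.uIcc_of_le hab]
    exact fun x hx => lt_of_lt_of_le ha hx.1
  have hHd : ∀ x : ℝ, 0 < x → HasDerivAt H (G x) x := by
    intro x hx
    have h1 : HasDerivAt (fun η : ℝ => η ^ (-n₂)) (-n₂ * x ^ (-n₂ - 1)) x :=
      Real.hasDerivAt_rpow_const (Or.inl hx.ne')
    have h2 : HasDerivAt (fun η => utld η - utld Y) (-(I x)) x := (hderiv x hx).sub_const _
    have h3 := (h1.mul h2).const_mul (-(1/n₂))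
    refine h3.congr_deriv ?_
    rw [hGdef, hg₁def, hkpdef]
    simp only []
    field_simp [ne_of_lt hn₂]
    ring
  have hg₁pos : ∀ x : ℝ, 0 < x → x ≤ Y → 0 ≤ g₁ x := by
    intro x hx hxY
    exact mul_nonneg (Real.rpow_nonneg hx.le _) (by linarith [hanti hx hxY])
  -- interval identity
  have hkey : ∀ ε : ℝ, 0 < ε → ε ≤ Y →
      ∫ s in ε..Y, g₁ s = -(H ε) - (1/n₂) * ∫ s in ε..Y, kp s := by
    intro ε hε hεY
    have hG : ∫ s in ε..Y, G s = H Y - H ε := by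
      apply intervalIntegral.integral_eq_sub_of_hasDerivAt
      · intro x hx
        rw [Set.uIcc_of_le hεY] at hx
        exact hHd x (lt_of_lt_of_le hε hx.1)
      · exact hIIof hGcont hε hεY
    have hHY : H Y = 0 := by rw [hHdef]; simp
    have hadd : ∫ s in ε..Y, G s = (∫ s in ε..Y, g₁ s) + (1/n₂) * ∫ s in ε..Y, kp s := by
      rw [hGdef]
      simp only []
      rw [intervalIntegral.integral_add (hIIof hg₁cont hε hεY)
        ((hIIof hkpcont hε hεY).const_mul _), intervalIntegral.integral_const_mul]
    rw [hHY] at hG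
    rw [hadd] at hG
    linarith
  have hHpos : ∀ ε : ℝ, 0 < ε → ε ≤ Y → 0 ≤ H ε := by
    intro ε hε hεY
    rw [hHdef]
    have := hanti hε hεY
    have h2 : (0:ℝ) ≤ ε ^ (-n₂) := Real.rpow_nonneg hε.le _
    have h3 : 0 ≤ -(1/n₂) := le_of_lt (neg_pos.2 (div_neg_of_pos_of_neg one_pos hn₂))
    exact mul_nonneg h3 (mul_nonneg h2 (by linarith))
  have hkpIoc : IntegrableOn kp (Set.Ioc 0 Y) volume := by
    rw [integrableOn_Ioc_iff_integrableOn_Ioo]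
    exact hint
  have hkpae : (fun _ : ℝ => (0:ℝ)) ≤ᶠ[ae (volume.restrict (Set.Ioc 0 Y))] kp := by
    apply (ae_restrict_iff' (μ := volume) (p := fun x => (0:ℝ) ≤ kp x) measurableSet_Ioc).2
    apply ae_of_all
    intro x hx
    exact mul_nonneg (Real.rpow_nonneg hx.1.le _) (hI_pos x hx.1).le
  have hkpbnd : ∀ ε : ℝ, 0 < ε → ε ≤ Y →
      ∫ s in ε..Y, kp s ≤ ∫ s in Set.Ioc 0 Y, kp s := by
    intro ε hε hεY
    rw [intervalIntegral.integral_of_le hεY]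
    apply setIntegral_mono_set hkpIoc hkpae
    exact Filter.Eventually.of_forall (Set.Ioc_subset_Ioc_left hε.le)
  have hkpnn : ∀ ε : ℝ, 0 < ε → ε ≤ Y → 0 ≤ ∫ s in ε..Y, kp s := by
    intro ε hε hεY
    apply intervalIntegral.integral_nonneg hεY
    intro x hx
    exact mul_nonneg (Real.rpow_nonneg (le_trans hε.le hx.1) _)
      (hI_pos x (lt_of_lt_of_le hε hx.1)).le
  set M : ℝ := (-(1/n₂)) * ∫ s in Set.Ioc 0 Y, kp s with hMdef
  have hbnd : ∀ ε : ℝ, 0 < ε → ε ≤ Y → ∫ s in ε..Y, g₁ s ≤ M := by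
    intro ε hε hεY
    rw [hkey ε hε hεY]
    have h1 := hHpos ε hε hεY
    have h2 := hkpbnd ε hε hεY
    have h3 : 0 ≤ -(1/n₂) := le_of_lt (neg_pos.2 (div_neg_of_pos_of_neg one_pos hn₂))
    rw [hMdef]
    nlinarith
  -- sequence
  set a : ℕ → ℝ := fun n => Y / (n+1) with hadef
  have ha_pos : ∀ n, 0 < a n := fun n => by rw [hadef]; positivity
  have ha_leY : ∀ n, a n ≤ Y := fun n => by
    rw [hadef]
    apply div_le_self hY.le
    have : (0:ℝ) ≤ n := Nat.cast_nonneg n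
    linarith
  have ha_anti : Antitone a := by
    intro m n hmn
    rw [hadef]
    apply div_le_div_of_nonneg_left hY.le (by positivity)
    have : (m:ℝ) ≤ n := Nat.cast_le.2 hmn
    linarith
  have ha_tend : Filter.Tendsto a Filter.atTop (nhds 0) := by
    rw [hadef]
    apply Filter.Tendsto.div_atTop (tendsto_const_nhds)
    apply Filter.tendsto_atTop_add_const_right
    exact tendsto_natCast_atTop_atTop
  have ha_tend' : Filter.Tendsto a Filter.atTop (nhdsWithin 0 (Set.Ioi 0)) := by
    apply tendsto_nhdsWithin_of_tendsto_nhds_of_eventually_within _ ha_tend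
    exact Filter.Eventually.of_forall (fun n => ha_pos n)
  have hfi : ∀ n : ℕ, IntegrableOn g₁ (Set.Ioc (a n) Y) volume := by
    intro n
    apply IntegrableOn.mono_set _ Set.Ioc_subset_Icc_self
    apply ContinuousOn.integrableOn_Icc
    apply hg₁cont.mono
    intro x hx
    exact lt_of_lt_of_le (ha_pos n) hx.1
  have hnorm : ∀ n : ℕ, ∫ s in Set.Ioc (a n) Y, ‖g₁ s‖ = ∫ s in Set.Ioc (a n) Y, g₁ s := by
    intro n
    apply setIntegral_congr_fun measurableSet_Ioc
    intro x hx
    simp only [Real.norm_eq_abs]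
    exact abs_of_nonneg (hg₁pos x (lt_of_lt_of_le (ha_pos n) hx.1.le) hx.2)
  have hg₁Ioc : IntegrableOn g₁ (Set.Ioc 0 Y) volume := by
    apply integrableOn_Ioc_of_intervalIntegral_norm_bounded_left hfi ha_tend
    apply Filter.Eventually.of_forall
    intro n
    rw [hnorm n, ← intervalIntegral.integral_of_le (ha_leY n)]
    exact hbnd (a n) (ha_pos n) (ha_leY n)
  -- value
  have hsm : ∀ n : ℕ, MeasurableSet (Set.Ioc (a n) Y) := fun n => measurableSet_Ioc
  have hmono : Monotone (fun n : ℕ => Set.Ioc (a n) Y) := fun m n hmn =>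
    Set.Ioc_subset_Ioc_left (ha_anti hmn)
  have hUnion : (⋃ n : ℕ, Set.Ioc (a n) Y) = Set.Ioc 0 Y := by
    apply Set.Subset.antisymm
    · apply Set.iUnion_subset
      intro n
      exact Set.Ioc_subset_Ioc_left (ha_pos n).le
    · intro x hx
      obtain ⟨n, hn⟩ := exists_nat_gt (Y / x)
      refine Set.mem_iUnion.2 ⟨n, ?_, hx.2⟩
      rw [hadef]
      simp only []
      rw [div_lt_iff₀ (by positivity : (0:ℝ) < (n:ℝ)+1)]
      rw [div_lt_iff₀ hx.1] at hn
      nlinarith [hx.1]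
  have htend1 : Filter.Tendsto (fun n : ℕ => ∫ s in Set.Ioc (a n) Y, g₁ s) Filter.atTop
      (nhds (∫ s in Set.Ioc 0 Y, g₁ s)) := by
    have := tendsto_setIntegral_of_monotone hsm hmono (hUnion ▸ hg₁Ioc)
    rwa [hUnion] at this
  have htendkp : Filter.Tendsto (fun n : ℕ => ∫ s in Set.Ioc (a n) Y, kp s) Filter.atTop
      (nhds (∫ s in Set.Ioc 0 Y, kp s)) := by
    have := tendsto_setIntegral_of_monotone hsm hmono (hUnion ▸ hkpIoc)
    rwa [hUnion] at this
  have htendH : Filter.Tendsto (fun n : ℕ => H (a n)) Filter.atTop (nhds 0) := by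
    have hcomp := hB0.comp ha_tend'
    have heq : ∀ n : ℕ, H (a n) = (-(1/n₂)) * ((a n) ^ (-n₂) * ∫ s in (a n)..Y, I s) := by
      intro n
      rw [hHdef]
      simp only []
      rw [hftc (ha_pos n) (ha_leY n)]
    have := hcomp.const_mul (-(1/n₂))
    rw [mul_zero] at this
    apply Filter.Tendsto.congr _ this
    intro n
    rw [heq n]
    simp [Function.comp]
  have htend2 : Filter.Tendsto (fun n : ℕ => ∫ s in Set.Ioc (a n) Y, g₁ s) Filter.atTop
      (nhds (0 - (1/n₂) * ∫ s in Set.Ioc 0 Y, kp s)) := by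
    have h := (htendH.neg.sub (htendkp.const_mul (1/n₂)))
    rw [neg_zero] at h
    apply Filter.Tendsto.congr _ h
    intro n
    have hh := hkey (a n) (ha_pos n) (ha_leY n)
    rw [intervalIntegral.integral_of_le (ha_leY n), intervalIntegral.integral_of_le (ha_leY n)] at hh
    exact hh.symm
  have hg₁val : ∫ s in Set.Ioc 0 Y, g₁ s = -(1/n₂) * ∫ s in Set.Ioc 0 Y, kp s := by
    have := tendsto_nhds_unique htend1 htend2
    linarith [this]
  -- g₂ piece
  have hrint : IntervalIntegrable (fun x : ℝ => x ^ (-n₂ - 1)) volume 0 Y :=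
    intervalIntegral.intervalIntegrable_rpow' (by linarith)
  have hg₂Ioc : IntegrableOn (fun η : ℝ => η ^ (-n₂ - 1) * utld Y) (Set.Ioc 0 Y) volume := by
    apply Integrable.mul_const
    rwa [intervalIntegrable_iff_integrableOn_Ioc_of_le hY.le] at hrint
  have hrval : ∫ s in Set.Ioc 0 Y, s ^ (-n₂ - 1) = Y ^ (-n₂) / (-n₂) := by
    rw [← intervalIntegral.integral_of_le hY.le,
      integral_rpow (Or.inl (by linarith : (-1:ℝ) < -n₂ - 1))]
    rw [show (-n₂ - 1 + 1 : ℝ) = -n₂ by ring, Real.zero_rpow (by linarith : -n₂ ≠ 0), sub_zero]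
  have hsplit : ∀ x ∈ Set.Ioc (0:ℝ) Y, x ^ (-n₂ - 1) * utld x = g₁ x + x ^ (-n₂ - 1) * utld Y := by
    intro x _
    rw [hg₁def]
    ring
  have htarIoc : IntegrableOn (fun η : ℝ => η ^ (-n₂ - 1) * utld η) (Set.Ioc 0 Y) volume := by
    have h := (hg₁Ioc.add hg₂Ioc :
      IntegrableOn (fun x => g₁ x + x ^ (-n₂ - 1) * utld Y) _ _)
    apply MeasureTheory.IntegrableOn.congr_fun h ?_ measurableSet_Ioc
    intro x hx
    exact (hsplit x hx).symm
  have htarval : ∫ η in Set.Ioc 0 Y, η ^ (-n₂ - 1) * utld η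
      = (∫ s in Set.Ioc 0 Y, g₁ s) + (Y ^ (-n₂) / (-n₂)) * utld Y := by
    rw [show (∫ η in Set.Ioc 0 Y, η ^ (-n₂ - 1) * utld η)
        = ∫ η in Set.Ioc 0 Y, (g₁ η + η ^ (-n₂ - 1) * utld Y) from
      setIntegral_congr_fun measurableSet_Ioc hsplit]
    rw [integral_add hg₁Ioc hg₂Ioc, MeasureTheory.integral_mul_const, hrval]
  constructor
  · rw [← integrableOn_Ioc_iff_integrableOn_Ioo]
    exact htarIoc
  · rw [← integral_Ioc_eq_integral_Ioo, ← integral_Ioc_eq_integral_Ioo (f := fun η => η ^ (-n₂) * I η),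
      htarval, hg₁val]
    field_simp [ne_of_lt hn₂]
    ring


theorem stmt_10_main
    (θ n₁ n₂ : ℝ)
    (hn₂0 : n₂ < 0) (hn₁1 : 1 < n₁)
    (u utld I : ℝ → ℝ)
    (hu_cont : ContinuousOn u (Set.Ici 0))
    (hI_pos : ∀ y : ℝ, 0 < y → 0 < I y)
    (hI_cont : ContinuousOn I (Set.Ioi 0))
    (hI_top : Filter.Tendsto I Filter.atTop (nhds 0))
    (hutld : ∀ y : ℝ, 0 < y → utld y = u (I y) - y * I y)
    (hderiv : ∀ y : ℝ, 0 < y → HasDerivAt utld (-(I y)) y)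
    (hlow : ∀ y : ℝ, 0 < y → u 0 ≤ utld y)
    (hI_int : ∀ y : ℝ, 0 < y →
      MeasureTheory.IntegrableOn (fun η => η ^ (-n₂) * I η) (Set.Ioo 0 y) MeasureTheory.volume)
    (X_R : ℝ → ℝ)
    (hXR : ∀ y : ℝ, 0 < y → X_R y = (2 / (θ ^ 2 * (n₁ - n₂))) *
      (y ^ (n₂ - 1) * (∫ η in Set.Ioo 0 y, η ^ (-n₂) * I η) +
       y ^ (n₁ - 1) * ∫ η in Set.Ioi y, η ^ (-n₁) * I η))
    (J_R : ℝ → ℝ)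
    (hJR : ∀ y : ℝ, 0 < y → J_R y = (2 / (θ ^ 2 * (n₁ - n₂))) *
      (y ^ n₂ * (∫ η in Set.Ioo 0 y, η ^ (-n₂ - 1) * utld η) +
       y ^ n₁ * ∫ η in Set.Ioi y, η ^ (-n₁ - 1) * utld η))
    :
    ∀ y : ℝ, 0 < y →
      HasDerivAt J_R (-X_R y) y ∧
      (2 / (θ ^ 2 * (n₁ - n₂))) *
          (n₂ * y ^ (n₂ - 1) * (∫ η in Set.Ioo 0 y, η ^ (-n₂ - 1) * utld η) +
           n₁ * y ^ (n₁ - 1) * ∫ η in Set.Ioi y, η ^ (-n₁ - 1) * utld η) =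
        -((2 / (θ ^ 2 * (n₁ - n₂))) *
          (y ^ (n₂ - 1) * (∫ η in Set.Ioo 0 y, η ^ (-n₂) * I η) +
           y ^ (n₁ - 1) * ∫ η in Set.Ioi y, η ^ (-n₁) * I η)) := by
  have hftc : ∀ {a b : ℝ}, 0 < a → a ≤ b → utld a - utld b = ∫ s in a..b, I s :=
    fun {a b} ha hab => aux_ftc hderiv hI_cont ha hab
  have htop : Filter.Tendsto utld Filter.atTop (nhds (u 0)) :=
    aux_utld_top hu_cont hI_pos hI_top hutld hlow
  -- abbreviations
  set C : ℝ := 2 / (θ ^ 2 * (n₁ - n₂)) with hC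
  set gA : ℝ → ℝ := fun η => η ^ (-n₂ - 1) * utld η with hgA
  set gB : ℝ → ℝ := fun η => η ^ (-n₁ - 1) * utld η with hgB
  set A : ℝ → ℝ := fun z => ∫ η in Set.Ioo 0 z, gA η with hA
  set B : ℝ → ℝ := fun z => ∫ η in Set.Ioi z, gB η with hB
  have hleft := fun (Y : ℝ) (hY : 0 < Y) =>
    aux_left (u := u) hderiv hI_pos hI_cont (fun {a b} => hftc)
      (aux_B0 hn₂0 hY hI_pos hI_cont (hI_int Y hY)) hn₂0 hY (hI_int Y hY)
  have hright := fun (Y : ℝ) (hY : 0 < Y) =>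
    aux_right hderiv hI_pos hI_cont hlow htop hn₁1 hY
  -- continuity of integrands on (0,∞)
  have hutld_cont : ContinuousOn utld (Set.Ioi 0) := fun x hx =>
    ((hderiv x hx).continuousAt).continuousWithinAt
  have hrp : ∀ p : ℝ, ContinuousOn (fun η : ℝ => η ^ p) (Set.Ioi 0) := fun p x hx =>
    (Real.continuousAt_rpow_const x p (Or.inl (ne_of_gt hx))).continuousWithinAt
  have hgAcont : ContinuousOn gA (Set.Ioi 0) := (hrp _).mul hutld_cont
  have hgBcont : ContinuousOn gB (Set.Ioi 0) := (hrp _).mul hutld_cont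
  have hIIof : ∀ {f : ℝ → ℝ}, ContinuousOn f (Set.Ioi 0) → ∀ {a b : ℝ}, 0 < a → a ≤ b →
      IntervalIntegrable f volume a b := by
    intro f hf a b ha hab
    apply ContinuousOn.intervalIntegrable
    apply hf.mono
    rw [Set.uIcc_of_le hab]
    exact fun x hx => lt_of_lt_of_le ha hx.1
  intro y hy
  -- values
  obtain ⟨hAint, hAval⟩ := hleft y hy
  obtain ⟨hQint, hBint, hBval⟩ := hright y hy
  -- rpow exponent arithmetic
  have e1 : y ^ (n₂ - 1) * y ^ (-n₂) = y ^ (-1 : ℝ) := by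
    rw [← Real.rpow_add hy]; congr 1; ring
  have e2 : y ^ (n₁ - 1) * y ^ (-n₁) = y ^ (-1 : ℝ) := by
    rw [← Real.rpow_add hy]; congr 1; ring
  have e3 : y ^ n₂ * y ^ (-n₂ - 1) = y ^ (-1 : ℝ) := by
    rw [← Real.rpow_add hy]; congr 1; ring
  have e4 : y ^ n₁ * y ^ (-n₁ - 1) = y ^ (-1 : ℝ) := by
    rw [← Real.rpow_add hy]; congr 1; ring
  have h1 : n₂ * y ^ (n₂ - 1) * A y
      = -(y ^ (-1:ℝ) * utld y) - y ^ (n₂ - 1) * ∫ η in Set.Ioo 0 y, η ^ (-n₂) * I η := by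
    linear_combination y ^ (n₂ - 1) * hAval - utld y * e1
  have h2 : n₁ * y ^ (n₁ - 1) * B y
      = y ^ (-1:ℝ) * utld y - y ^ (n₁ - 1) * ∫ η in Set.Ioi y, η ^ (-n₁) * I η := by
    linear_combination y ^ (n₁ - 1) * hBval + utld y * e2
  have hpart2 : C * (n₂ * y ^ (n₂ - 1) * A y + n₁ * y ^ (n₁ - 1) * B y) =
      -(C * (y ^ (n₂ - 1) * (∫ η in Set.Ioo 0 y, η ^ (-n₂) * I η) +
        y ^ (n₁ - 1) * ∫ η in Set.Ioi y, η ^ (-n₁) * I η)) := by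
    linear_combination C * h1 + C * h2
  refine ⟨?_, hpart2⟩
  -- derivative part
  set w : ℝ := y / 2 with hw
  set Z : ℝ := y + 1 with hZ
  have hw0 : 0 < w := by rw [hw]; linarith
  have hwy : w < y := by rw [hw]; linarith
  have hyZ : y < Z := by rw [hZ]; linarith
  have hZ0 : 0 < Z := lt_trans hy hyZ
  have hgAIoc : ∀ z : ℝ, 0 < z → IntegrableOn gA (Set.Ioc 0 z) volume := by
    intro z hz
    rw [integrableOn_Ioc_iff_integrableOn_Ioo]
    exact (hleft z hz).1
  -- A as base + interval integral on Ioi w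
  have hAeq : ∀ z ∈ Set.Ioi w, A z = (∫ η in Set.Ioc 0 w, gA η) + ∫ η in w..z, gA η := by
    intro z hz
    have hz' : w < z := hz
    have hz0 : 0 < z := lt_trans hw0 hz'
    rw [hA]
    simp only []
    rw [← integral_Ioc_eq_integral_Ioo,
      ← Set.Ioc_union_Ioc_eq_Ioc hw0.le hz'.le,
      setIntegral_union (Set.Ioc_disjoint_Ioc_of_le le_rfl) measurableSet_Ioc
        (hgAIoc w hw0) ((hgAIoc z hz0).mono_set (Set.Ioc_subset_Ioc_left hw0.le)),
      intervalIntegral.integral_of_le hz'.le]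
  have hAd : HasDerivAt A (gA y) y := by
    have hder : HasDerivAt (fun z => (∫ η in Set.Ioc 0 w, gA η) + ∫ η in w..z, gA η) (gA y) y := by
      apply HasDerivAt.const_add
      apply intervalIntegral.integral_hasDerivAt_right
      · exact hIIof hgAcont hw0 hwy.le
      · exact hgAcont.stronglyMeasurableAtFilter isOpen_Ioi y hy
      · exact hgAcont.continuousAt (Ioi_mem_nhds hy)
    apply hder.congr_of_eventuallyEq
    filter_upwards [Ioi_mem_nhds hwy] with z hz
    exact hAeq z hz
  -- B as const - interval integral
  have hBeq : ∀ z ∈ Set.Ioo (0:ℝ) Z, B z = (∫ η in Set.Ioi Z, gB η) - ∫ η in Z..z, gB η := by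
    intro z hz
    have hIocint : IntegrableOn gB (Set.Ioc z Z) volume :=
      ((hright z hz.1).2.1).mono_set (fun x hx => hx.1)
    have hIoiint : IntegrableOn gB (Set.Ioi Z) volume := (hright Z hZ0).2.1
    have hsplitB : ∫ η in Set.Ioi z, gB η
        = (∫ η in Set.Ioc z Z, gB η) + ∫ η in Set.Ioi Z, gB η := by
      rw [← setIntegral_union Set.Ioc_disjoint_Ioi_same measurableSet_Ioi hIocint hIoiint,
        Set.Ioc_union_Ioi_eq_Ioi hz.2.le]
    rw [hB]
    simp only []
    rw [hsplitB, intervalIntegral.integral_symm, intervalIntegral.integral_of_le hz.2.le]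
    ring
  have hBd : HasDerivAt B (-(gB y)) y := by
    have hder0 : HasDerivAt (fun z => ∫ η in Z..z, gB η) (gB y) y := by
      apply intervalIntegral.integral_hasDerivAt_right
      · exact (hIIof hgBcont hy hyZ.le).symm
      · exact hgBcont.stronglyMeasurableAtFilter isOpen_Ioi y hy
      · exact hgBcont.continuousAt (Ioi_mem_nhds hy)
    have hder : HasDerivAt (fun z => (∫ η in Set.Ioi Z, gB η) - ∫ η in Z..z, gB η) (-(gB y)) y :=
      hder0.const_sub _
    apply hder.congr_of_eventuallyEq
    filter_upwards [Ioo_mem_nhds hy hyZ] with z hz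
    exact hBeq z hz
  -- assemble derivative of the explicit function
  have hy2d : HasDerivAt (fun z : ℝ => z ^ n₂) (n₂ * y ^ (n₂ - 1)) y :=
    Real.hasDerivAt_rpow_const (Or.inl hy.ne')
  have hy1d : HasDerivAt (fun z : ℝ => z ^ n₁) (n₁ * y ^ (n₁ - 1)) y :=
    Real.hasDerivAt_rpow_const (Or.inl hy.ne')
  have hJd : HasDerivAt (fun z => C * (z ^ n₂ * A z + z ^ n₁ * B z))
      (C * ((n₂ * y ^ (n₂ - 1) * A y + y ^ n₂ * gA y) +
            (n₁ * y ^ (n₁ - 1) * B y + y ^ n₁ * (-(gB y))))) y :=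
    ((hy2d.mul hAd).add (hy1d.mul hBd)).const_mul C
  have hDval : C * ((n₂ * y ^ (n₂ - 1) * A y + y ^ n₂ * gA y) +
      (n₁ * y ^ (n₁ - 1) * B y + y ^ n₁ * (-(gB y)))) = -X_R y := by
    have hcancel : y ^ n₂ * gA y + y ^ n₁ * (-(gB y)) = 0 := by
      rw [hgA, hgB]
      simp only []
      linear_combination utld y * e3 - utld y * e4
    rw [hXR y hy]
    linear_combination C * hcancel + hpart2
  rw [← hDval]
  apply hJd.congr_of_eventuallyEq
  filter_upwards [Ioi_mem_nhds hy] with z hz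
  rw [hJR z hz]


/-- J_R is differentiable on (0,∞) with J_R′(y) = −X_R(y); equivalently the
displayed integral identity holds for every y > 0. -/
theorem stmt_10
    (δ r θ n₁ n₂ : ℝ)
    (hδ : 0 < δ) (hr : 0 < r) (hθ : θ ≠ 0)
    (hn₂0 : n₂ < 0) (hn₁1 : 1 < n₁)
    (hroot₁ : θ ^ 2 / 2 * n₁ ^ 2 + (δ - r - θ ^ 2 / 2) * n₁ - δ = 0)
    (hroot₂ : θ ^ 2 / 2 * n₂ ^ 2 + (δ - r - θ ^ 2 / 2) * n₂ - δ = 0)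
    (u u' I utld : ℝ → ℝ)
    (hu_mono : StrictMonoOn u (Set.Ici 0))
    (hu_conc : StrictConcaveOn ℝ (Set.Ici 0) u)
    (hu_cont : ContinuousOn u (Set.Ici 0))
    (hu_deriv : ∀ c : ℝ, 0 < c → HasDerivAt u (u' c) c)
    (hu'_cont : ContinuousOn u' (Set.Ioi 0))
    (hu'_top : Filter.Tendsto u' Filter.atTop (nhds 0))
    (hu'_zero : Filter.Tendsto u' (nhdsWithin 0 (Set.Ioi 0)) Filter.atTop)
    (hI_pos : ∀ y : ℝ, 0 < y → 0 < I y)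
    (hI_left : ∀ y : ℝ, 0 < y → u' (I y) = y)
    (hI_right : ∀ c : ℝ, 0 < c → I (u' c) = c)
    (hI_anti : StrictAntiOn I (Set.Ioi 0))
    (hI_cont : ContinuousOn I (Set.Ioi 0))
    (hI_zero : Filter.Tendsto I (nhdsWithin 0 (Set.Ioi 0)) Filter.atTop)
    (hI_top : Filter.Tendsto I Filter.atTop (nhds 0))
    (hutld : ∀ y : ℝ, 0 < y → utld y = u (I y) - y * I y)
    (hI_int : ∀ y : ℝ, 0 < y →
      MeasureTheory.IntegrableOn (fun η => η ^ (-n₂) * I η) (Set.Ioo 0 y) MeasureTheory.volume)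
    (X_R : ℝ → ℝ)
    (hXR : ∀ y : ℝ, 0 < y → X_R y = (2 / (θ ^ 2 * (n₁ - n₂))) *
      (y ^ (n₂ - 1) * (∫ η in Set.Ioo 0 y, η ^ (-n₂) * I η) +
       y ^ (n₁ - 1) * ∫ η in Set.Ioi y, η ^ (-n₁) * I η))
    (J_R : ℝ → ℝ)
    (hJR : ∀ y : ℝ, 0 < y → J_R y = (2 / (θ ^ 2 * (n₁ - n₂))) *
      (y ^ n₂ * (∫ η in Set.Ioo 0 y, η ^ (-n₂ - 1) * utld η) +
       y ^ n₁ * ∫ η in Set.Ioi y, η ^ (-n₁ - 1) * utld η))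
    :
    ∀ y : ℝ, 0 < y →
      HasDerivAt J_R (-X_R y) y ∧
      (2 / (θ ^ 2 * (n₁ - n₂))) *
          (n₂ * y ^ (n₂ - 1) * (∫ η in Set.Ioo 0 y, η ^ (-n₂ - 1) * utld η) +
           n₁ * y ^ (n₁ - 1) * ∫ η in Set.Ioi y, η ^ (-n₁ - 1) * utld η) =
        -((2 / (θ ^ 2 * (n₁ - n₂))) *
          (y ^ (n₂ - 1) * (∫ η in Set.Ioo 0 y, η ^ (-n₂) * I η) +
           y ^ (n₁ - 1) * ∫ η in Set.Ioi y, η ^ (-n₁) * I η)) := by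
  have hderiv : ∀ y : ℝ, 0 < y → HasDerivAt utld (-(I y)) y := fun y hy =>
    aux_utld_deriv hu_conc hu_deriv hI_pos hI_left hI_cont hutld hy
  have hlow : ∀ y : ℝ, 0 < y → u 0 ≤ utld y := fun y hy => by
    have h := aux_max hu_conc hu_deriv hI_pos hI_left hutld hy (le_refl (0:ℝ))
    simpa using h
  exact stmt_10_main θ n₁ n₂ hn₂0 hn₁1 u utld I hu_cont hI_pos hI_cont hI_top hutld
    hderiv hlow hI_int X_R hXR J_R hJR
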